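/- Let U be a unitary operator on ℓ²(ℤ^d) such that U and U* map D_X into D_X, and suppose that for each j ∈ {1,…,d} there is a bounded operator C_j with C_jψ = X_jψ − U(X_j(U*ψ)) for all ψ ∈ D_X. Then for every ψ ∈ D_X and every n ∈ ℕ: ‖U^nψ‖_X² − ‖ψ‖_X² = 2·Σ_{m=1}^{n} Σ_{j=1}^{d} Re⟨C_j U^mψ, X_j U^mψ⟩ − Σ_{m=1}^{n} Σ_{j=1}^{d} ‖C_j U^mψ‖², and ‖U^{*n}ψ‖_X² − ‖ψ‖_X² = −2·Σ_{m=0}^{n−1} Σ_{j=1}^{d} Re⟨C_j U^{*m}ψ, X_j U^{*m}ψ⟩ + Σ_{m=0}^{n−1} Σ_{j=1}^{d} ‖C_j U^{*m}ψ‖². -/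

import Mathlib

noncomputable section

/-- `ℓ²(ℤ^d)`. -/
abbrev l2Zd (d : ℕ) : Type := lp (fun _ : (Fin d → ℤ) => ℂ) 2

/-- Membership in `D_X = ∩_j D(X_j)`: each `X_j φ = (β ↦ β_j φ(β))` is square-summable. -/
def memDX {d : ℕ} (φ : l2Zd d) : Prop :=
  ∀ j : Fin d, Memℓp (fun β : Fin d → ℤ => ((β j : ℤ) : ℂ) * φ β) 2

/-- `‖φ‖_X² = ‖φ‖² + Σ_j ‖X_j φ‖²` (written via `tsum`s). -/
noncomputable def xNormSq {d : ℕ} (φ : l2Zd d) : ℝ :=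
  ‖φ‖ ^ 2 + ∑ j : Fin d, ∑' β : Fin d → ℤ, (β j : ℝ) ^ 2 * ‖φ β‖ ^ 2

namespace Stmt17Aux

lemma conj_mul_re (z : ℂ) : ((starRingEnd ℂ) z * z).re = ‖z‖ ^ 2 := by
  rw [← Complex.normSq_eq_conj_mul_self]
  simp [Complex.normSq_eq_norm_sq, ← Complex.ofReal_pow]

/-- `X_j φ` as an element of `ℓ²`. -/
def Xop {d : ℕ} (j : Fin d) (φ : l2Zd d) (h : memDX φ) : l2Zd d :=
  ⟨fun β => ((β j : ℤ) : ℂ) * φ β, h j⟩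

lemma Xop_apply {d : ℕ} (j : Fin d) (φ : l2Zd d) (h : memDX φ) (β : Fin d → ℤ) :
    (Xop j φ h) β = ((β j : ℤ) : ℂ) * φ β := rfl

lemma normsq_lp {d : ℕ} (f : l2Zd d) : ‖f‖ ^ 2 = ∑' β, ‖f β‖ ^ 2 := by
  have h2 := Complex.hasSum_re (lp.hasSum_inner (𝕜 := ℂ) f f)
  simp only [RCLike.inner_apply] at h2
  have h3 : (fun β : Fin d → ℤ => (f β * (starRingEnd ℂ) (f β)).re)
      = fun β => ‖f β‖ ^ 2 := funext fun β => by rw [mul_comm]; exact conj_mul_re _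
  rw [h3] at h2
  have h4 : ‖f‖ ^ 2 = (inner ℂ f f).re := by
    rw [← inner_self_eq_norm_sq (𝕜 := ℂ) f, RCLike.re_to_complex]
  rw [h4, h2.tsum_eq]

lemma xop_normsq {d : ℕ} (j : Fin d) (φ : l2Zd d) (h : memDX φ) :
    ‖Xop j φ h‖ ^ 2 = ∑' β : Fin d → ℤ, (β j : ℝ) ^ 2 * ‖φ β‖ ^ 2 := by
  rw [normsq_lp]
  refine tsum_congr fun β => ?_
  rw [Xop_apply, norm_mul, mul_pow]
  norm_num [Complex.norm_intCast]

lemma inner_C_X {d : ℕ} (j : Fin d) (g φ : l2Zd d) (h : memDX φ) :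
    (inner ℂ g (Xop j φ h))
      = ∑' β : Fin d → ℤ, (starRingEnd ℂ) (g β) * (((β j : ℤ) : ℂ) * φ β) := by
  rw [lp.inner_eq_tsum]
  exact tsum_congr fun β => by rw [RCLike.inner_apply, Xop_apply]; ring

lemma xNormSq_eq {d : ℕ} (φ : l2Zd d) (h : memDX φ) :
    xNormSq φ = ‖φ‖ ^ 2 + ∑ j : Fin d, ‖Xop j φ h‖ ^ 2 := by
  unfold xNormSq
  exact congrArg _ (Finset.sum_congr rfl fun j _ => (xop_normsq j φ h).symm)

variable {d : ℕ} (U : l2Zd d →L[ℂ] l2Zd d)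

/-- The key one-step identity. -/
lemma step (hU : U ∈ unitary (l2Zd d →L[ℂ] l2Zd d))
    (hUD : ∀ φ : l2Zd d, memDX φ → memDX (U φ) ∧ memDX ((star U) φ))
    (C : Fin d → (l2Zd d →L[ℂ] l2Zd d))
    (hC : ∀ (j : Fin d) (ψ : l2Zd d) (hψ : memDX ψ) (hψ' : memDX ((star U) ψ))
      (β : Fin d → ℤ),
      (C j ψ) β = ((β j : ℤ) : ℂ) * ψ β -
        (U (⟨fun β' : Fin d → ℤ => ((β' j : ℤ) : ℂ) * ((star U) ψ) β', hψ' j⟩ :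
          l2Zd d)) β)
    (φ : l2Zd d) (hφ : memDX φ) :
    xNormSq ((star U) φ) = xNormSq φ
      - 2 * ∑ j : Fin d, (∑' β : Fin d → ℤ,
          (starRingEnd ℂ) ((C j φ) β) * (((β j : ℤ) : ℂ) * φ β)).re
      + ∑ j : Fin d, ‖C j φ‖ ^ 2 := by
  have h' : memDX ((star U) φ) := (hUD φ hφ).2
  have hnormU : ∀ x : l2Zd d, ‖U x‖ = ‖x‖ :=
    ContinuousLinearMap.norm_map_of_mem_unitary hU
  have hnormU' : ∀ x : l2Zd d, ‖(star U) x‖ = ‖x‖ :=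
    ContinuousLinearMap.norm_map_of_mem_unitary (Unitary.star_mem hU)
  have key : ∀ j : Fin d, ‖Xop j ((star U) φ) h'‖ ^ 2
      = ‖Xop j φ hφ‖ ^ 2
        - 2 * (∑' β : Fin d → ℤ,
            (starRingEnd ℂ) ((C j φ) β) * (((β j : ℤ) : ℂ) * φ β)).re
        + ‖C j φ‖ ^ 2 := by
    intro j
    have hCj : C j φ = Xop j φ hφ - U (Xop j ((star U) φ) h') := by
      apply lp.ext
      funext β
      have := hC j φ hφ h' β
      rw [this]; rfl
    have hUX : U (Xop j ((star U) φ) h') = Xop j φ hφ - C j φ := by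
      rw [hCj]; abel
    have h1 : ‖Xop j ((star U) φ) h'‖ = ‖Xop j φ hφ - C j φ‖ := by
      rw [← hUX, hnormU]
    rw [h1, @norm_sub_sq ℂ]
    have h2 : RCLike.re (inner ℂ (Xop j φ hφ) (C j φ))
        = (∑' β : Fin d → ℤ,
            (starRingEnd ℂ) ((C j φ) β) * (((β j : ℤ) : ℂ) * φ β)).re := by
      rw [RCLike.re_to_complex, ← inner_C_X j (C j φ) φ hφ, ← inner_conj_symm,
        Complex.conj_re]
    rw [h2]
  rw [xNormSq_eq ((star U) φ) h', xNormSq_eq φ hφ, hnormU' φ]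
  rw [Finset.sum_congr rfl fun j _ => key j]
  rw [Finset.sum_add_distrib, Finset.sum_sub_distrib, ← Finset.mul_sum]
  ring

end Stmt17Aux

open Stmt17Aux in
/-- Proposition 5.7 ("propag6"), identity part: if a unitary `U` on `ℓ²(ℤ^d)` (together
with `U*`) preserves `D_X`, and `C_j` are the bounded operators with
`C_jψ = X_jψ − U(X_j(U*ψ))` on `D_X`, then for all `ψ ∈ D_X` and `n ∈ ℕ`:
`‖U^nψ‖_X² − ‖ψ‖_X² = 2Σ_{m=1}^n Σ_j Re⟨C_j U^mψ, X_j U^mψ⟩ − Σ_{m=1}^n Σ_j ‖C_j U^mψ‖²`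
and the analogous identity for `U*`. -/
theorem stmt17 (d : ℕ) (U : l2Zd d →L[ℂ] l2Zd d)
    (hU : U ∈ unitary (l2Zd d →L[ℂ] l2Zd d))
    -- U and U* map D_X into D_X
    (hUD : ∀ φ : l2Zd d, memDX φ → memDX (U φ) ∧ memDX ((star U) φ))
    -- the bounded operators C_j = X_j − U X_j U* on D_X
    (C : Fin d → (l2Zd d →L[ℂ] l2Zd d))
    (hC : ∀ (j : Fin d) (ψ : l2Zd d) (hψ : memDX ψ) (hψ' : memDX ((star U) ψ))
      (β : Fin d → ℤ),
      (C j ψ) β = ((β j : ℤ) : ℂ) * ψ β -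
        (U (⟨fun β' : Fin d → ℤ => ((β' j : ℤ) : ℂ) * ((star U) ψ) β', hψ' j⟩ :
          l2Zd d)) β) :
    ∀ ψ : l2Zd d, memDX ψ → ∀ n : ℕ,
      (xNormSq ((U ^ n) ψ) - xNormSq ψ =
        2 * ∑ m ∈ Finset.Icc 1 n, ∑ j : Fin d,
            (∑' β : Fin d → ℤ,
              (starRingEnd ℂ) ((C j ((U ^ m) ψ)) β) *
                (((β j : ℤ) : ℂ) * ((U ^ m) ψ) β)).re -
          ∑ m ∈ Finset.Icc 1 n, ∑ j : Fin d, ‖C j ((U ^ m) ψ)‖ ^ 2) ∧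
      (xNormSq (((star U) ^ n) ψ) - xNormSq ψ =
        -2 * ∑ m ∈ Finset.range n, ∑ j : Fin d,
            (∑' β : Fin d → ℤ,
              (starRingEnd ℂ) ((C j (((star U) ^ m) ψ)) β) *
                (((β j : ℤ) : ℂ) * (((star U) ^ m) ψ) β)).re +
          ∑ m ∈ Finset.range n, ∑ j : Fin d, ‖C j (((star U) ^ m) ψ)‖ ^ 2) := by
  intro ψ hψ
  -- D_X is preserved by all powers
  have hDpow : ∀ n : ℕ, memDX ((U ^ n) ψ) := by
    intro n
    induction n with
    | zero => simpa using hψ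
    | succ n ih =>
      rw [pow_succ', ContinuousLinearMap.mul_apply]
      exact (hUD _ ih).1
  have hDpow' : ∀ n : ℕ, memDX (((star U) ^ n) ψ) := by
    intro n
    induction n with
    | zero => simpa using hψ
    | succ n ih =>
      rw [pow_succ', ContinuousLinearMap.mul_apply]
      exact (hUD _ ih).2
  have hstarcancel : ∀ n : ℕ, (star U) ((U ^ (n + 1)) ψ) = (U ^ n) ψ := by
    intro n
    have h1 : (star U) ((U ^ (n + 1)) ψ) = ((star U * U) * U ^ n) ψ := by
      rw [pow_succ']
      simp [ContinuousLinearMap.mul_apply, mul_assoc]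
    rw [h1, hU.1, one_mul]
  intro n
  constructor
  · induction n with
    | zero => simp
    | succ n ih =>
      have hstep := step U hU hUD C hC ((U ^ (n + 1)) ψ) (hDpow (n + 1))
      rw [hstarcancel n] at hstep
      rw [Finset.sum_Icc_succ_top (Nat.one_le_iff_ne_zero.mpr (Nat.succ_ne_zero n)),
        Finset.sum_Icc_succ_top (Nat.one_le_iff_ne_zero.mpr (Nat.succ_ne_zero n))]
      linarith
  · induction n with
    | zero => simp
    | succ n ih =>
      have hstep := step U hU hUD C hC (((star U) ^ n) ψ) (hDpow' n)
      have hps : ((star U) ^ (n + 1)) ψ = (star U) (((star U) ^ n) ψ) := by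
        rw [pow_succ', ContinuousLinearMap.mul_apply]
      rw [hps, Finset.sum_range_succ, Finset.sum_range_succ]
      linarith
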